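/- Let s be a finite nonempty set of directions at a vertex (angles in [0, 2π)), α ∈ (0, 2π), and let u be a direction not in s. Define, for any direction j, v_j^{(s)} := |{k ∈ s : (θ_k − θ_j) mod 2π ≤ α}|, and v^{(s)} := max_{j ∈ s} v_j^{(s)}. Then v_u^{(s)} ≤ v^{(s)}. -/

import Mathlib

open Real

noncomputable def amod (x : ℝ) : ℝ := toIcoMod Real.two_pi_pos 0 x

noncomputable def ang (a b : ℝ) : ℝ := amod (b - a)

lemma amod_mem (x : ℝ) : amod x ∈ Set.Ico 0 (2 * π) := by
  have := toIcoMod_mem_Ico Real.two_pi_pos 0 x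
  simpa [amod] using this

lemma ang_sub (u j k : ℝ) (h : ang u j ≤ ang u k) :
    ang j k = ang u k - ang u j := by
  have hjm := amod_mem (j - u)
  have hkm := amod_mem (k - u)
  have hj := toIcoMod_add_toIcoDiv_zsmul Real.two_pi_pos 0 (j - u)
  have hk := toIcoMod_add_toIcoDiv_zsmul Real.two_pi_pos 0 (k - u)
  show toIcoMod Real.two_pi_pos 0 (k - j) = _
  rw [toIcoMod_eq_iff]
  refine ⟨⟨by simpa [ang, amod] using h, ?_⟩,
    toIcoDiv Real.two_pi_pos 0 (k - u) - toIcoDiv Real.two_pi_pos 0 (j - u), ?_⟩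
  · have h1 := hkm.2
    have h2 := hjm.1
    simp only [ang, amod] at *
    linarith
  · simp only [ang, amod, zsmul_eq_mul] at *
    push_cast
    linarith

theorem stmt5 (s : Finset ℝ) (hs : s.Nonempty) (hsub : ∀ θ ∈ s, θ ∈ Set.Ico 0 (2 * π))
    (α : ℝ) (hα : α ∈ Set.Ioo 0 (2 * π)) (u : ℝ) (hu : u ∉ s) (hu' : u ∈ Set.Ico 0 (2 * π)) :
    (s.filter fun k => ang u k ≤ α).card ≤
      s.sup' hs fun j => (s.filter fun k => ang j k ≤ α).card := by
  by_cases hne : (s.filter fun k => ang u k ≤ α).Nonempty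
  · obtain ⟨j, hjmem, hjmin⟩ := Finset.exists_min_image _ (fun k => ang u k) hne
    rw [Finset.mem_filter] at hjmem
    refine le_trans (Finset.card_le_card ?_) (Finset.le_sup' (fun j => (s.filter fun k => ang j k ≤ α).card) hjmem.1)
    intro k hk
    rw [Finset.mem_filter] at hk ⊢
    refine ⟨hk.1, ?_⟩
    have hmin := hjmin k (Finset.mem_filter.mpr hk)
    have := ang_sub u j k hmin
    have hj0 := (amod_mem (j - u)).1
    rw [this]
    have : ang u j ≥ 0 := hj0
    linarith [hk.2]
  · rw [Finset.not_nonempty_iff_eq_empty.mp hne]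
    simp only [Finset.card_empty, Nat.zero_le]
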